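/- arXiv:2205.14385 — 2 statements merged into one kernel-verified Lean document; each statement's English description precedes it below -/
import Mathlib

section
/- Let X be a Banach space with dual tower (X_n) and let lim→ X_n be the direct limit with canonical maps α_n : X_n → lim→ X_n. Given a compatible family φ = (φ_n) ∈ ∏_n X_n* with φ_n = κ_{n,m}*(φ_m) for all n ≤ m and sup_n ‖φ_n‖ < ∞, the formula Φ([(x_n, n)]) := φ_n(x_n) gives a well-defined bounded linear functional on the dense subspace ⊔_n α_n(X_n) of lim→ X_n, with ‖Φ‖ ≤ sup_n ‖φ_n‖. -/
open NormedSpace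

/-- The adjoint of a continuous linear map: `adjL f φ = φ ∘ f`. -/
noncomputable def adjL {X Y : Type*} [NormedAddCommGroup X] [NormedSpace ℂ X]
    [NormedAddCommGroup Y] [NormedSpace ℂ Y] (f : X →L[ℂ] Y) :
    StrongDual ℂ Y →L[ℂ] StrongDual ℂ X :=
  (ContinuousLinearMap.compL ℂ X Y ℂ).flip f


/-- A bundled Banach space over `ℂ`. -/
structure Ban where
  X : Type
  [grp : NormedAddCommGroup X]
  [mod : NormedSpace ℂ X]
  [cpl : CompleteSpace X]

attribute [instance] Ban.grp Ban.mod Ban.cpl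

/-- The bidual of a bundled Banach space. -/
noncomputable def Ban.bidual (B : Ban) : Ban := ⟨StrongDual ℂ (StrongDual ℂ B.X)⟩

/-- The dual tower: `tower B 0 = B`, `tower B (n+1) = (tower B n)**`. -/
noncomputable def tower (B : Ban) : ℕ → Ban
  | 0 => B
  | n + 1 => (tower B n).bidual

/-- The composite canonical embedding `X_n → X_{n+k}`. -/
noncomputable def kappaAux (B : Ban) (n : ℕ) :
    (k : ℕ) → (tower B n).X →L[ℂ] (tower B (n + k)).X
  | 0 => ContinuousLinearMap.id ℂ _
  | k + 1 => (inclusionInDoubleDual ℂ (tower B (n + k)).X).comp (kappaAux B n k)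

/-- The connecting map `κ_{n,m} : X_n → X_m` of the dual tower, for `n ≤ m`. -/
noncomputable def kappa (B : Ban) (n m : ℕ) (h : n ≤ m) :
    (tower B n).X →L[ℂ] (tower B m).X := by
  rw [← Nat.add_sub_cancel' h]
  exact kappaAux B n (m - n)

/-- The iterated double adjoint `𝒥_n(f) : X_n → Y_n` along the dual towers. -/
noncomputable def Jmap {B C : Ban} (f : B.X →L[ℂ] C.X) :
    (n : ℕ) → (tower B n).X →L[ℂ] (tower C n).X
  | 0 => f
  | n + 1 => adjL (adjL (Jmap f n))

/-- given a compatible family `φ = (φ_n) ∈ ∏ X_n*` with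
`φ_n = κ_{n,m}*(φ_m)` and `sup_n ‖φ_n‖ < ∞`, the formula `Φ(α_n(x)) := φ_n(x)` is
well defined and extends to a bounded linear functional on the dense subspace
`⋃_n α_n(X_n)` of the direct limit, of norm at most `sup_n ‖φ_n‖`. Here the direct
limit is realized as a Banach space `L` with compatible isometric embeddings `α_n`
whose ranges have dense union. -/
theorem stmt11 (B : Ban) {L : Type} [NormedAddCommGroup L] [NormedSpace ℂ L]
    [CompleteSpace L]
    (α : ∀ n, (tower B n).X →L[ℂ] L)
    (hiso : ∀ n x, ‖α n x‖ = ‖x‖)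
    (hcompat : ∀ n m (h : n ≤ m), (α m).comp (kappa B n m h) = α n)
    (hdense : Dense (⋃ n, Set.range fun x => α n x))
    (φ : ∀ n, StrongDual ℂ (tower B n).X)
    (hφ : ∀ n m (h : n ≤ m), φ n = adjL (kappa B n m h) (φ m))
    (hbdd : BddAbove (Set.range fun n => ‖φ n‖)) :
    -- the formula is well defined:
    (∀ n m (xn : (tower B n).X) (xm : (tower B m).X),
        α n xn = α m xm → φ n xn = φ m xm) ∧
    -- and gives a bounded linear functional on the subspace spanned by `⋃_n α_n(X_n)`,
    -- of norm at most `sup_n ‖φ_n‖`: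
    ∃ Φ : ↥(Submodule.span ℂ (⋃ n, Set.range fun x => α n x)) →L[ℂ] ℂ,
      (∀ n (x : (tower B n).X),
        Φ ⟨α n x, Submodule.subset_span
            (Set.mem_iUnion.mpr ⟨n, Set.mem_range_self x⟩)⟩ = φ n x) ∧
      ‖Φ‖ ≤ ⨆ n, ‖φ n‖ := by
  
  classical
  have hinj : ∀ n, Function.Injective (α n) := by
    intro n a b hab
    have h0 : ‖a - b‖ = 0 := by
      rw [← hiso n, map_sub, hab, sub_self, norm_zero]
    simpa [sub_eq_zero] using norm_eq_zero.mp h0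
  have hadj : ∀ n m (h : n ≤ m) x, φ n x = φ m (kappa B n m h x) := by
    intro n m h x
    have := congrArg (fun ψ => ψ x) (hφ n m h)
    simpa [adjL] using this
  have halpha : ∀ n m (h : n ≤ m) x, α n x = α m (kappa B n m h x) := by
    intro n m h x
    have := congrArg (fun g => g x) (hcompat n m h)
    simpa using this.symm
  have hwd : ∀ n m (xn : (tower B n).X) (xm : (tower B m).X),
      α n xn = α m xm → φ n xn = φ m xm := by
    intro n m xn xm hx
    rcases le_total n m with h | h
    · have hk : kappa B n m h xn = xm := hinj m (by rw [← halpha n m h xn, hx])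
      rw [hadj n m h xn, hk]
    · have hk : kappa B m n h xm = xn := hinj n (by rw [← halpha m n h xm, hx])
      rw [hadj m n h xm, hk]
  refine ⟨hwd, ?_⟩
  set U := ⋃ n, Set.range fun x => α n x with hU
  have hrepr : ∀ y ∈ Submodule.span ℂ U, ∃ n x, α n x = y := by
    intro y hy
    induction hy using Submodule.span_induction with
    | mem z hz =>
        obtain ⟨_, ⟨n, rfl⟩, x, rfl⟩ := hz
        exact ⟨n, x, rfl⟩
    | zero => exact ⟨0, 0, map_zero _⟩
    | add y z _ _ hy hz =>
        obtain ⟨n, x, rfl⟩ := hy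
        obtain ⟨m, w, rfl⟩ := hz
        refine ⟨max n m, kappa B n _ (le_max_left n m) x
          + kappa B m _ (le_max_right n m) w, ?_⟩
        rw [map_add, ← halpha, ← halpha]
    | smul c y _ hy =>
        obtain ⟨n, x, rfl⟩ := hy
        exact ⟨n, c • x, map_smul _ _ _⟩
  let pk : ∀ y : ↥(Submodule.span ℂ U), Σ' n x, α n x = (y : L) := fun y =>
    ⟨(hrepr y y.2).choose, (hrepr y y.2).choose_spec.choose,
      (hrepr y y.2).choose_spec.choose_spec⟩
  let f : ↥(Submodule.span ℂ U) → ℂ := fun y => φ (pk y).1 (pk y).2.1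
  have hf : ∀ (y : ↥(Submodule.span ℂ U)) n x, α n x = (y : L) → f y = φ n x := by
    intro y n x hx
    exact hwd (pk y).1 n (pk y).2.1 x (by rw [(pk y).2.2, ← hx])
  have hadd : ∀ y z, f (y + z) = f y + f z := by
    intro y z
    obtain ⟨n, x, hx⟩ := hrepr y y.2
    obtain ⟨m, w, hw⟩ := hrepr z z.2
    have hy : f y = φ (max n m) (kappa B n _ (le_max_left n m) x) := by
      rw [hf y n x hx, hadj]
    have hz : f z = φ (max n m) (kappa B m _ (le_max_right n m) w) := by
      rw [hf z m w hw, hadj]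
    have hsum : f (y + z) = φ (max n m)
        (kappa B n _ (le_max_left n m) x + kappa B m _ (le_max_right n m) w) := by
      apply hf
      push_cast
      rw [map_add, ← halpha, ← halpha, hx, hw]
    rw [hsum, map_add, hy, hz]
  have hsmul : ∀ (c : ℂ) y, f (c • y) = c * f y := by
    intro c y
    obtain ⟨n, x, hx⟩ := hrepr y y.2
    have h1 : f (c • y) = φ n (c • x) := by
      apply hf
      push_cast
      rw [map_smul, hx]
    rw [h1, map_smul, hf y n x hx]
    rfl
  let Flin : ↥(Submodule.span ℂ U) →ₗ[ℂ] ℂ :=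
    { toFun := f, map_add' := hadd, map_smul' := hsmul }
  set C := ⨆ n, ‖φ n‖ with hC
  have hCle : ∀ n, ‖φ n‖ ≤ C := fun n => le_ciSup hbdd n
  have hbound : ∀ y, ‖Flin y‖ ≤ C * ‖y‖ := by
    intro y
    obtain ⟨n, x, hx⟩ := hrepr y y.2
    have : Flin y = φ n x := hf y n x hx
    rw [this]
    calc ‖φ n x‖ ≤ ‖φ n‖ * ‖x‖ := (φ n).le_opNorm x
    _ ≤ C * ‖x‖ := by gcongr; exact hCle n
    _ = C * ‖y‖ := by rw [← hiso n x, hx]; rfl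
  refine ⟨Flin.mkContinuous C hbound, ?_, ?_⟩
  · intro n x
    exact hf _ n x rfl
  · exact Flin.mkContinuous_norm_le ((norm_nonneg _).trans (hCle 0)) hbound
end

section
/- Let A be a uniform algebra on a compact Hausdorff space K (a closed point-separating unital subalgebra of C(K)), and suppose every element of a dense subset D of A has a square root in A. Then for any two characters φ, ψ ∈ Sp(A) with φ ≠ ψ, one has ‖φ − ψ‖ = 2; that is, every Gleason part of A is a single point. -/
set_option synthInstance.maxHeartbeats 1000000
set_option maxHeartbeats 8000000

private lemma sqrt_sub_aux (G ε : ℝ) (h : 0 ≤ G - ε) (he : 0 ≤ ε) :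
    Real.sqrt G - Real.sqrt ε ≤ Real.sqrt (G - ε) := by
  nlinarith [Real.sq_sqrt h, Real.sq_sqrt he, Real.sq_sqrt (by linarith : (0:ℝ) ≤ G),
    Real.sqrt_nonneg (G-ε), Real.sqrt_nonneg ε, Real.sqrt_nonneg G,
    mul_nonneg (Real.sqrt_nonneg (G-ε)) (Real.sqrt_nonneg ε)]

private lemma mob_aux (z : ℂ) (c : ℝ) (hc0 : 0 ≤ c) (hc1 : c ≤ 1) (hz : ‖z‖ ≤ 1) :
    ‖z - (c:ℂ)‖ ≤ ‖1 - (c:ℂ) * z‖ := by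
  have h1 : Complex.normSq z ≤ 1 := by
    have h2 := Complex.sq_norm z
    have hz' : ‖z‖ ≤ 1 := hz
    nlinarith [norm_nonneg z]
  have hre : z.re^2 + z.im^2 ≤ 1 := by
    simpa [Complex.normSq_apply, sq] using h1
  rw [Complex.norm_def, Complex.norm_def]
  apply Real.sqrt_le_sqrt
  simp only [Complex.normSq_apply, Complex.sub_re, Complex.sub_im, Complex.ofReal_re,
    Complex.ofReal_im, Complex.one_re, Complex.one_im, Complex.mul_re, Complex.mul_im]
  nlinarith [mul_nonneg (by nlinarith : (0:ℝ) ≤ 1 - c^2)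
    (by nlinarith : (0:ℝ) ≤ 1 - z.re^2 - z.im^2)]

private lemma value_aux (ε δ r s c t : ℝ) (hδdef : δ = ε^2/8) (hrdef : r = 1 - δ)
    (hs2 : s^2 = 1 - r^2) (hspos : 0 < s) (hsle : s ≤ ε/2) (hcr : c * r = 1 - s)
    (hcpos : 0 < c) (hclt1 : c < 1) (hcler : c ≤ r) (hrt : r < t) (htle1 : t ≤ 1)
    (hct1 : c * t < 1) (hε : 0 < ε) (hε1 : ε < 1) :
    2 - ε ≤ (t - c)/(1 - c*t) + c := by
  have hrpos : 0 < r := by nlinarith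
  have hδpos : 0 < δ := by rw [hδdef]; positivity
  have key : 2*r - ε*r + 2*s ≤ 2 := by
    nlinarith [mul_nonneg (by linarith : (0:ℝ) ≤ 2 - ε) hδpos.le]
  have hcrs : s*(c*r) = s*(1-s) := by rw [hcr]
  have hrr : r*r = 1 - s*s := by nlinarith [hs2]
  have k2 : s*(2*r - ε*r - 1 + s) ≤ s*(1 - s) :=
    mul_le_mul_of_nonneg_left (by linarith) hspos.le
  have k3 : r*((2-ε-c)*s) ≤ r*(r-c) := by nlinarith [k2, hcrs, hrr, hcr]
  have hA : (2 - ε - c) * s ≤ r - c := le_of_mul_le_mul_left k3 hrpos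
  have hB : (r - c) * (1 - c*t) ≤ (t - c) * s := by
    nlinarith [mul_nonneg (sub_nonneg.mpr hrt.le) (by nlinarith : (0:ℝ) ≤ 1 - c^2), hcr]
  have h1 : 2 - ε - c ≤ (t - c)/(1-c*t) := by
    rw [le_div_iff₀ (by linarith : (0:ℝ) < 1 - c*t)]
    have h2 : (2-ε-c)*s*(1-c*t) ≤ (r-c)*(1-c*t) :=
      mul_le_mul_of_nonneg_right hA (by linarith)
    have h3 : (2-ε-c)*s*(1-c*t) ≤ (t-c)*s := le_trans h2 hB
    have h4 : s*((2-ε-c)*(1-c*t)) ≤ s*(t-c) := by nlinarith [h3]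
    exact le_of_mul_le_mul_left h4 hspos
  linarith

private lemma char_norm_le {K : Type} [TopologicalSpace K] [CompactSpace K] [Nonempty K]
    (A : Subalgebra ℂ C(K, ℂ)) (hclosed : IsClosed (A : Set C(K, ℂ)))
    (χ : ↥A →L[ℂ] ℂ) (hm : ∀ f g : ↥A, χ (f*g) = χ f * χ g) (h1 : χ 1 = 1) :
    ‖χ‖ ≤ 1 := by
  haveI : CompleteSpace ↥A := hclosed.completeSpace_coe
  haveI : NormOneClass ↥A := ⟨by
    show ‖((1 : ↥A) : C(K,ℂ))‖ = 1
    rw [Subalgebra.coe_one]; exact norm_one⟩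
  let χa : ↥A →ₐ[ℂ] ℂ :=
    { toFun := χ, map_one' := h1, map_mul' := hm,
      map_zero' := χ.map_zero, map_add' := χ.map_add,
      commutes' := by
        intro c
        show χ ((algebraMap ℂ ↥A) c) = c
        rw [Algebra.algebraMap_eq_smul_one, χ.map_smul, h1, smul_eq_mul, mul_one] }
  refine χ.opNorm_le_bound zero_le_one (fun f => ?_)
  have h1' : χ f ∈ spectrum ℂ f := AlgHom.apply_mem_spectrum χa f
  rw [one_mul]; exact spectrum.norm_le_norm_of_mem h1'

private lemma step_lemma {K : Type} [TopologicalSpace K] [CompactSpace K] [Nonempty K]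
    (A : Subalgebra ℂ C(K, ℂ)) (hclosed : IsClosed (A : Set C(K, ℂ)))
    (D : Set C(K, ℂ)) (hDA : D ⊆ (A : Set C(K, ℂ)))
    (hdense : (A : Set C(K, ℂ)) ⊆ closure D)
    (hroot : ∀ f ∈ D, ∃ g ∈ A, f = g * g)
    (φ ψ : ↥A →L[ℂ] ℂ)
    (hφm : ∀ f g : ↥A, φ (f * g) = φ f * φ g) (hφ1 : φ 1 = 1)
    (hψm : ∀ f g : ↥A, ψ (f * g) = ψ f * ψ g) (hψ1 : ψ 1 = 1)
    (hφb : ∀ f : ↥A, ‖φ f‖ ≤ ‖f‖) (hψb : ∀ f : ↥A, ‖ψ f‖ ≤ ‖f‖)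
    (f : ↥A) (hf1 : ‖f‖ ≤ 1) (hfψ : ψ f = 0) (ε : ℝ) (hε : 0 < ε) :
    ∃ f' : ↥A, ‖f'‖ ≤ 1 ∧ ψ f' = 0 ∧ Real.sqrt ‖φ f‖ - ε ≤ ‖φ f'‖ := by
  haveI : CompleteSpace ↥A := hclosed.completeSpace_coe
  haveI : NormOneClass ↥A := ⟨by
    show ‖((1 : ↥A) : C(K,ℂ))‖ = 1
    rw [Subalgebra.coe_one]; exact norm_one⟩
  have hnr : ∀ r : ℝ, ‖((r:ℝ):ℂ)‖ = |r| := fun r => (Complex.norm_real r).trans (Real.norm_eq_abs r)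
  set t : ℝ := ‖φ f‖ with hft
  have ht0 : 0 ≤ t := norm_nonneg _
  have ht1 : t ≤ 1 := le_trans (hφb f) hf1
  by_cases hcase : Real.sqrt t ≤ ε
  · exact ⟨0, by simp, map_zero ψ, by simp; linarith⟩
  push_neg at hcase
  have hst1 : Real.sqrt t ≤ 1 := Real.sqrt_le_one.mpr ht1
  have hεle1 : ε ≤ 1 := le_trans hcase.le hst1
  set δ : ℝ := (ε/4)^2 with hδdef
  have hδpos : 0 < δ := by positivity
  have hsqδ : Real.sqrt δ = ε/4 := by rw [hδdef, Real.sqrt_sq (by linarith)]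
  have hδle : δ ≤ ε/16 := by nlinarith
  have hδlt : δ < t := by
    have h1 := mul_self_lt_mul_self hε.le hcase
    have h2 := Real.mul_self_sqrt ht0
    nlinarith
  have hfc : (f : C(K,ℂ)) ∈ closure D := hdense f.2
  obtain ⟨f₁, hf₁D, hdist⟩ := Metric.mem_closure_iff.mp hfc δ hδpos
  obtain ⟨g, hgA, hfg⟩ := hroot f₁ hf₁D
  set F₁ : ↥A := ⟨f₁, hDA hf₁D⟩ with hF₁def
  set Gg : ↥A := ⟨g, hgA⟩ with hGgdef
  have hGG : Gg * Gg = F₁ := by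
    apply Subtype.ext
    show (g : C(K,ℂ)) * g = f₁
    exact hfg.symm
  have hFf : ‖F₁ - f‖ < δ := by
    have heq : ‖F₁ - f‖ = dist (f : C(K,ℂ)) f₁ := by
      rw [dist_comm, dist_eq_norm]; rfl
    rw [heq]; exact hdist
  have hF₁n : ‖F₁‖ ≤ 1 + δ := by
    have h1 : ‖F₁‖ ≤ ‖f‖ + ‖F₁ - f‖ := by
      have := norm_add_le f (F₁ - f)
      rwa [add_sub_cancel] at this
    linarith [hFf.le]
  have hGgn : ‖Gg‖ ≤ Real.sqrt (1+δ) := by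
    show ‖(Gg : ↥A)‖ ≤ Real.sqrt (1+δ)
    have hp : ∀ x : K, ‖(g : C(K,ℂ)) x‖ ≤ Real.sqrt (1+δ) := by
      intro x
      have h1 : ‖(g:C(K,ℂ)) x‖^2 = ‖(f₁ : C(K,ℂ)) x‖ := by
        rw [hfg]
        simp [sq, ContinuousMap.mul_apply]
      have h2 : ‖(f₁ : C(K,ℂ)) x‖ ≤ 1 + δ :=
        le_trans ((f₁ : C(K,ℂ)).norm_coe_le_norm x) hF₁n
      calc ‖(g:C(K,ℂ)) x‖ = Real.sqrt (‖(g:C(K,ℂ)) x‖^2) :=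
            (Real.sqrt_sq (norm_nonneg _)).symm
      _ ≤ Real.sqrt (1+δ) := Real.sqrt_le_sqrt (by rw [h1]; exact h2)
    exact (ContinuousMap.norm_le _ (Real.sqrt_nonneg _)).2 hp
  set a := φ Gg with hadef
  set b := ψ Gg with hbdef
  have hφF₁ : ‖φ F₁ - φ f‖ ≤ δ := by
    rw [← map_sub]; exact le_trans (hφb _) hFf.le
  have hψF₁ : ‖ψ F₁‖ ≤ δ := by
    have h1 : ψ F₁ = ψ (F₁ - f) := by rw [map_sub, hfψ, sub_zero]
    rw [h1]; exact le_trans (hψb _) hFf.le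
  have haa : a * a = φ F₁ := by rw [hadef, ← hφm, hGG]
  have hbb : b * b = ψ F₁ := by rw [hbdef, ← hψm, hGG]
  have haL : Real.sqrt (t - δ) ≤ ‖a‖ := by
    have h1 : ‖a‖^2 = ‖φ F₁‖ := by rw [← haa, norm_mul, sq]
    have h2 : t - δ ≤ ‖φ F₁‖ := by
      have h4 : |‖φ F₁‖ - ‖φ f‖| ≤ δ := le_trans (abs_norm_sub_norm_le (φ F₁) (φ f)) hφF₁
      have h5 := abs_le.mp h4
      rw [← hft] at h5
      linarith [h5.1]
    calc Real.sqrt (t-δ) ≤ Real.sqrt (‖a‖^2) := Real.sqrt_le_sqrt (by rw [h1]; exact h2)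
    _ = ‖a‖ := Real.sqrt_sq (norm_nonneg _)
  have hbU : ‖b‖ ≤ Real.sqrt δ := by
    have h1 : ‖b‖^2 = ‖ψ F₁‖ := by rw [← hbb, norm_mul, sq]
    calc ‖b‖ = Real.sqrt (‖b‖^2) := (Real.sqrt_sq (norm_nonneg _)).symm
    _ ≤ Real.sqrt δ := Real.sqrt_le_sqrt (by rw [h1]; exact hψF₁)
  set N : ℝ := Real.sqrt (1+δ) + Real.sqrt δ with hNdef
  have hNpos : 0 < N := by
    have h1 := Real.sqrt_pos.mpr (show (0:ℝ) < 1 + δ by linarith)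
    have h2 := Real.sqrt_nonneg δ
    linarith
  have hN : N ≤ 1 + ε/2 := by
    have h1 : Real.sqrt (1+δ) ≤ 1 + δ := by
      have h2 := Real.sq_sqrt (show (0:ℝ) ≤ 1 + δ by linarith)
      nlinarith [Real.sqrt_nonneg (1+δ)]
    rw [hNdef, hsqδ]
    linarith
  set f' : ↥A := ((N:ℝ) : ℂ)⁻¹ • (Gg - b • 1) with hf'def
  have hψf' : ψ f' = 0 := by
    simp only [hf'def, map_smul, map_sub, hψ1, smul_eq_mul, mul_one]
    rw [← hbdef, sub_self, mul_zero]
  have hf'n : ‖f'‖ ≤ 1 := by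
    rw [hf'def, norm_smul, norm_inv, hnr, abs_of_nonneg hNpos.le]
    have h1 : ‖Gg - b • 1‖ ≤ N := by
      have h2 : ‖b • (1:↥A)‖ = ‖b‖ := by rw [norm_smul, norm_one, mul_one]
      calc ‖Gg - b•(1:↥A)‖ ≤ ‖Gg‖ + ‖b • (1:↥A)‖ := norm_sub_le _ _
      _ ≤ Real.sqrt (1+δ) + Real.sqrt δ := by rw [h2]; exact add_le_add hGgn hbU
    calc N⁻¹ * ‖Gg - b•(1:↥A)‖ ≤ N⁻¹ * N :=
          mul_le_mul_of_nonneg_left h1 (inv_nonneg.mpr hNpos.le)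
    _ = 1 := inv_mul_cancel₀ (ne_of_gt hNpos)
  have hφf' : ‖φ f'‖ = N⁻¹ * ‖a - b‖ := by
    have h0 : φ f' = ((N:ℝ):ℂ)⁻¹ * (a - b) := by
      simp only [hf'def, map_smul, map_sub, hφ1, smul_eq_mul, mul_one, hadef, hbdef]
    rw [h0, norm_mul, norm_inv, hnr, abs_of_nonneg hNpos.le]
  refine ⟨f', hf'n, hψf', ?_⟩
  rw [hφf']
  have hab : Real.sqrt t - ε/2 ≤ ‖a - b‖ := by
    have h1 : ‖a‖ - ‖b‖ ≤ ‖a - b‖ := norm_sub_norm_le a b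
    have h2 : Real.sqrt t - ε/4 ≤ Real.sqrt (t - δ) := by
      have h3 := sqrt_sub_aux t δ (by linarith) hδpos.le
      rw [hsqδ] at h3
      linarith
    linarith [hbU, haL, hsqδ ▸ hbU]
  have hfin : (Real.sqrt t - ε) * N ≤ Real.sqrt t - ε/2 := by
    nlinarith [hN, hNpos, hcase, hst1]
  calc Real.sqrt t - ε = ((Real.sqrt t - ε) * N) * N⁻¹ := by field_simp
  _ ≤ (Real.sqrt t - ε/2) * N⁻¹ := mul_le_mul_of_nonneg_right hfin (inv_nonneg.mpr hNpos.le)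
  _ ≤ ‖a - b‖ * N⁻¹ := mul_le_mul_of_nonneg_right hab (inv_nonneg.mpr hNpos.le)
  _ = N⁻¹ * ‖a - b‖ := mul_comm _ _

private lemma mobius_lemma {K : Type} [TopologicalSpace K] [CompactSpace K] [Nonempty K]
    (A : Subalgebra ℂ C(K, ℂ)) (hclosed : IsClosed (A : Set C(K, ℂ)))
    (φ ψ : ↥A →L[ℂ] ℂ)
    (hφm : ∀ f g : ↥A, φ (f * g) = φ f * φ g) (hφ1 : φ 1 = 1)
    (hψm : ∀ f g : ↥A, ψ (f * g) = ψ f * ψ g) (hψ1 : ψ 1 = 1)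
    (hφb : ∀ f : ↥A, ‖φ f‖ ≤ ‖f‖)
    (ε : ℝ) (hε : 0 < ε) (hε1 : ε < 1)
    (f₂ : ↥A) (hf₂1 : ‖f₂‖ ≤ 1) (hf₂ψ : ψ f₂ = 0)
    (htr : 1 - ε^2/8 < ‖φ f₂‖) :
    2 - ε ≤ ‖φ - ψ‖ := by
  haveI : CompleteSpace ↥A := hclosed.completeSpace_coe
  haveI : NormOneClass ↥A := ⟨by
    show ‖((1 : ↥A) : C(K,ℂ))‖ = 1
    rw [Subalgebra.coe_one]; exact norm_one⟩
  have hnr : ∀ r : ℝ, ‖((r:ℝ):ℂ)‖ = |r| := fun r => (Complex.norm_real r).trans (Real.norm_eq_abs r)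
  set t : ℝ := ‖φ f₂‖ with hf₂t
  set δ : ℝ := ε^2/8 with hδdef
  have hδpos : 0 < δ := by positivity
  have hδlt : δ < 1/8 := by nlinarith
  set r : ℝ := 1 - δ with hrdef
  have hr1 : r < 1 := by rw [hrdef]; linarith
  have hrpos : 0 < r := by rw [hrdef]; linarith
  have htle1 : t ≤ 1 := le_trans (hφb f₂) hf₂1
  have htpos : 0 < t := lt_trans (by rw [hrdef]; linarith) htr
  have hφf₂0 : φ f₂ ≠ 0 := by
    intro h
    rw [hf₂t, h, norm_zero] at htpos
    exact lt_irrefl 0 htpos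
  set lam : ℂ := (t:ℂ) / (φ f₂) with hlamdef
  set f₃ : ↥A := lam • f₂ with hf₃def
  have hφf₃ : φ f₃ = ((t:ℝ):ℂ) := by
    rw [hf₃def, map_smul, smul_eq_mul, hlamdef, div_mul_cancel₀ _ hφf₂0]
  have hψf₃ : ψ f₃ = 0 := by rw [hf₃def, map_smul, hf₂ψ, smul_zero]
  have hlamn : ‖lam‖ = 1 := by
    rw [hlamdef, norm_div, hnr, abs_of_nonneg htpos.le, ← hf₂t, div_self (ne_of_gt htpos)]
  have hf₃n : ‖f₃‖ ≤ 1 := by rw [hf₃def, norm_smul, hlamn, one_mul]; exact hf₂1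
  set s : ℝ := Real.sqrt (1 - r^2) with hsdef
  have hrsq : 1 - r^2 = 2*δ - δ^2 := by rw [hrdef]; ring
  have hs2 : s^2 = 1 - r^2 := Real.sq_sqrt (by nlinarith)
  have hspos : 0 < s := Real.sqrt_pos.mpr (by nlinarith)
  have hslt1 : s < 1 := by nlinarith [hs2]
  have hsgtδ : δ < s := by nlinarith [hs2, hspos]
  have hsle : s ≤ ε/2 := by nlinarith [hs2, hspos]
  set c : ℝ := (1 - s)/r with hcdef
  have hcpos : 0 < c := div_pos (by linarith) hrpos
  have hclt1 : c < 1 := by rw [hcdef, div_lt_one hrpos]; linarith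
  have hcr : c * r = 1 - s := by rw [hcdef, div_mul_cancel₀ _ (ne_of_gt hrpos)]
  have hcler : c ≤ r := by
    rw [hcdef, div_le_iff₀ hrpos]
    nlinarith [hs2]
  have hrt : r < t := by rw [hrdef]; exact htr
  have hct1 : c * t < 1 := by nlinarith
  have hcf₃ : ‖((c:ℝ):ℂ) • f₃‖ < 1 := by
    rw [norm_smul, hnr, abs_of_nonneg hcpos.le]
    calc c * ‖f₃‖ ≤ c * 1 := mul_le_mul_of_nonneg_left hf₃n hcpos.le
    _ < 1 := by linarith
  set u : (↥A)ˣ := Units.oneSub (((c:ℝ):ℂ) • f₃) hcf₃ with hudef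
  set v : ↥A := ↑u⁻¹ with hvdef
  have huval : (u : ↥A) = 1 - ((c:ℝ):ℂ) • f₃ := rfl
  have huv : ((1:↥A) - ((c:ℝ):ℂ) • f₃) * v = 1 := by
    rw [← huval, hvdef]; exact u.mul_inv
  have hφu : φ ((1:↥A) - ((c:ℝ):ℂ) • f₃) = 1 - ((c:ℝ):ℂ)*((t:ℝ):ℂ) := by
    rw [map_sub, hφ1, map_smul, hφf₃, smul_eq_mul]
  have hctne : ((1:ℂ) - ((c:ℝ):ℂ)*((t:ℝ):ℂ)) ≠ 0 := by
    intro h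
    have h2 : ((1 - c*t : ℝ) : ℂ) = 0 := by push_cast; linear_combination h
    have h3 : (1 - c*t : ℝ) = 0 := by exact_mod_cast h2
    linarith
  have hφv : φ v = ((1:ℂ) - ((c:ℝ):ℂ)*((t:ℝ):ℂ))⁻¹ := by
    have h1 : φ ((1:↥A) - ((c:ℝ):ℂ) • f₃) * φ v = 1 := by rw [← hφm, huv, hφ1]
    rw [hφu] at h1
    exact (inv_eq_of_mul_eq_one_right h1).symm
  have hψu : ψ ((1:↥A) - ((c:ℝ):ℂ) • f₃) = 1 := by
    rw [map_sub, hψ1, map_smul, hψf₃, smul_zero, sub_zero]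
  have hψv : ψ v = 1 := by
    have h1 : ψ ((1:↥A) - ((c:ℝ):ℂ) • f₃) * ψ v = 1 := by rw [← hψm, huv, hψ1]
    rw [hψu, one_mul] at h1
    exact h1
  set F : ↥A := (f₃ - ((c:ℝ):ℂ) • 1) * v with hFdef
  have hφF : φ F = (((t:ℝ):ℂ) - ((c:ℝ):ℂ)) * ((1:ℂ) - ((c:ℝ):ℂ)*((t:ℝ):ℂ))⁻¹ := by
    rw [hFdef, hφm, map_sub, hφf₃, map_smul, hφ1, smul_eq_mul, mul_one, hφv]
  have hψF : ψ F = -((c:ℝ):ℂ) := by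
    rw [hFdef, hψm, map_sub, hψf₃, map_smul, hψ1, smul_eq_mul, mul_one, hψv, mul_one,
      zero_sub]
  set X : ℝ := (t - c)/(1 - c*t) + c with hXdef
  have hXval : φ F - ψ F = ((X:ℝ):ℂ) := by
    rw [hφF, hψF, hXdef]
    push_cast
    rw [div_eq_mul_inv]
    ring
  have hXnonneg : 0 ≤ X := by
    rw [hXdef]
    have h1 : (0:ℝ) ≤ (t - c)/(1 - c*t) := div_nonneg (by linarith) (by linarith)
    linarith
  have hXge : 2 - ε ≤ X := by
    rw [hXdef]
    exact value_aux ε δ r s c t hδdef hrdef hs2 hspos hsle hcr hcpos hclt1 hcler hrt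
      htle1 hct1 hε hε1
  have hFn : ‖F‖ ≤ 1 := by
    show ‖(F : ↥A)‖ ≤ 1
    have hpt : ∀ x : K, ‖(F : C(K,ℂ)) x‖ ≤ 1 := by
      intro x
      have h1 : (((1:↥A) - ((c:ℝ):ℂ) • f₃) * v : ↥A) = (1 : ↥A) := huv
      have h2 : (((((1:↥A) - ((c:ℝ):ℂ) • f₃) * v : ↥A)) : C(K,ℂ)) x = (1:ℂ) := by
        rw [h1]; simp
      have h3 : ((1:ℂ) - ((c:ℝ):ℂ) * (f₃:C(K,ℂ)) x) * (v:C(K,ℂ)) x = 1 := by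
        simpa [ContinuousMap.mul_apply, ContinuousMap.sub_apply, smul_eq_mul] using h2
      have hFx : (F : C(K,ℂ)) x = ((f₃:C(K,ℂ)) x - ((c:ℝ):ℂ)) * (v:C(K,ℂ)) x := by
        rw [hFdef]
        simp [ContinuousMap.mul_apply, ContinuousMap.sub_apply, smul_eq_mul]
      have hfx1 : ‖(f₃:C(K,ℂ)) x‖ ≤ 1 := le_trans ((f₃:C(K,ℂ)).norm_coe_le_norm x) hf₃n
      have hmob := mob_aux ((f₃:C(K,ℂ)) x) c hcpos.le hclt1.le hfx1
      have hvx : ‖(1:ℂ) - ((c:ℝ):ℂ) * (f₃:C(K,ℂ)) x‖ * ‖(v:C(K,ℂ)) x‖ = 1 := by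
        rw [← norm_mul, h3, norm_one]
      rw [hFx, norm_mul]
      calc ‖(f₃:C(K,ℂ)) x - ((c:ℝ):ℂ)‖ * ‖(v:C(K,ℂ)) x‖
          ≤ ‖(1:ℂ) - ((c:ℝ):ℂ) * (f₃:C(K,ℂ)) x‖ * ‖(v:C(K,ℂ)) x‖ :=
            mul_le_mul_of_nonneg_right hmob (norm_nonneg _)
      _ = 1 := hvx
    exact (ContinuousMap.norm_le _ zero_le_one).2 hpt
  have hval : ‖φ F - ψ F‖ = X := by
    rw [hXval, hnr, abs_of_nonneg hXnonneg]
  calc 2 - ε ≤ ‖φ F - ψ F‖ := by rw [hval]; exact hXge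
  _ = ‖(φ - ψ) F‖ := by rw [ContinuousLinearMap.sub_apply]
  _ ≤ ‖φ - ψ‖ * ‖F‖ := (φ - ψ).le_opNorm F
  _ ≤ ‖φ - ψ‖ * 1 := mul_le_mul_of_nonneg_left hFn (ContinuousLinearMap.opNorm_nonneg _)
  _ = ‖φ - ψ‖ := mul_one _

/-- let `A` be a uniform algebra on a compact Hausdorff space `K` (a
closed, point-separating, unital subalgebra of `C(K)`). If every element of a dense
subset `D` of `A` has a square root in `A`, then any two distinct characters
`φ, ψ ∈ Sp(A)` satisfy `‖φ - ψ‖ = 2`; i.e. every Gleason part is a single point. -/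
theorem stmt16 {K : Type} [TopologicalSpace K] [CompactSpace K] [T2Space K]
    (A : Subalgebra ℂ C(K, ℂ)) (hclosed : IsClosed (A : Set C(K, ℂ)))
    (hsep : ∀ x y : K, x ≠ y → ∃ f ∈ A, f x ≠ f y)
    (D : Set C(K, ℂ)) (hDA : D ⊆ (A : Set C(K, ℂ)))
    (hdense : (A : Set C(K, ℂ)) ⊆ closure D)
    (hroot : ∀ f ∈ D, ∃ g ∈ A, f = g * g)
    (φ ψ : ↥A →L[ℂ] ℂ)
    (hφm : ∀ f g : ↥A, φ (f * g) = φ f * φ g) (hφ1 : φ 1 = 1)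
    (hψm : ∀ f g : ↥A, ψ (f * g) = ψ f * ψ g) (hψ1 : ψ 1 = 1)
    (hne : φ ≠ ψ) :
    ‖φ - ψ‖ = 2 := by
  rcases isEmpty_or_nonempty K with hK | hK
  · exfalso
    have h10 : (1 : ↥A) = 0 := by
      apply Subtype.ext
      apply ContinuousMap.ext
      intro x
      exact isEmptyElim x
    rw [h10, map_zero] at hφ1
    exact zero_ne_one hφ1
  have hφn := char_norm_le A hclosed φ hφm hφ1
  have hψn := char_norm_le A hclosed ψ hψm hψ1
  have hφb : ∀ f : ↥A, ‖φ f‖ ≤ ‖f‖ := fun f => by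
    calc ‖φ f‖ ≤ ‖φ‖ * ‖f‖ := φ.le_opNorm f
    _ ≤ 1 * ‖f‖ := mul_le_mul_of_nonneg_right hφn (norm_nonneg f)
    _ = ‖f‖ := one_mul _
  have hψb : ∀ f : ↥A, ‖ψ f‖ ≤ ‖f‖ := fun f => by
    calc ‖ψ f‖ ≤ ‖ψ‖ * ‖f‖ := ψ.le_opNorm f
    _ ≤ 1 * ‖f‖ := mul_le_mul_of_nonneg_right hψn (norm_nonneg f)
    _ = ‖f‖ := one_mul _
  have hub : ‖φ - ψ‖ ≤ 2 := le_trans (norm_sub_le φ ψ) (by linarith)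
  set S : Set ℝ := {x | ∃ f : ↥A, ‖f‖ ≤ 1 ∧ ψ f = 0 ∧ ‖φ f‖ = x} with hSdef
  obtain ⟨x₀, hx₀⟩ : ∃ x : ↥A, φ x ≠ ψ x := by
    by_contra h; push_neg at h; exact hne (ContinuousLinearMap.ext h)
  have hd0 : φ x₀ - ψ x₀ ≠ 0 := sub_ne_zero.mpr hx₀
  have hnr : ∀ r : ℝ, ‖((r:ℝ):ℂ)‖ = |r| := fun r => (Complex.norm_real r).trans (Real.norm_eq_abs r)
  set h₀ : ↥A := (φ x₀ - ψ x₀)⁻¹ • (x₀ - ψ x₀ • 1) with hh₀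
  have hψh₀ : ψ h₀ = 0 := by
    simp only [hh₀, map_smul, map_sub, hψ1, smul_eq_mul, mul_one]
    rw [sub_self, mul_zero]
  have hφh₀ : φ h₀ = 1 := by
    simp only [hh₀, map_smul, map_sub, hφ1, smul_eq_mul, mul_one]
    rw [inv_mul_cancel₀ hd0]
  have hh₀0 : h₀ ≠ 0 := by
    intro h; rw [h, map_zero] at hφh₀; exact zero_ne_one hφh₀
  have hh₀pos : 0 < ‖h₀‖ := norm_pos_iff.mpr hh₀0
  have h0mem : ‖h₀‖⁻¹ ∈ S := by
    refine ⟨((‖h₀‖:ℝ) : ℂ)⁻¹ • h₀, ?_, ?_, ?_⟩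
    · rw [norm_smul, norm_inv, hnr, abs_of_nonneg hh₀pos.le, inv_mul_cancel₀ (ne_of_gt hh₀pos)]
    · rw [map_smul, hψh₀, smul_zero]
    · rw [map_smul, hφh₀, smul_eq_mul, mul_one, norm_inv, hnr, abs_of_nonneg hh₀pos.le]
  have hSne : S.Nonempty := ⟨_, h0mem⟩
  have hSle1 : ∀ x ∈ S, x ≤ 1 := by
    rintro x ⟨f, hf1, -, hfx⟩
    rw [← hfx]; exact le_trans (hφb f) hf1
  have hSbdd : BddAbove S := ⟨1, fun x hx => hSle1 x hx⟩
  set G := sSup S with hGdef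
  have hGpos : 0 < G := lt_of_lt_of_le (inv_pos.mpr hh₀pos) (le_csSup hSbdd h0mem)
  have hGstep : ∀ ε : ℝ, 0 < ε → Real.sqrt (G - ε) - ε ≤ G := by
    intro ε hε
    obtain ⟨x, hxS, hxgt⟩ := exists_lt_of_lt_csSup hSne (show G - ε < G by linarith)
    obtain ⟨f, hf1, hfψ, hfx⟩ := hxS
    obtain ⟨f', hf'1, hf'ψ, hf'⟩ := step_lemma A hclosed D hDA hdense hroot φ ψ
      hφm hφ1 hψm hψ1 hφb hψb f hf1 hfψ ε hε
    have h1 : ‖φ f'‖ ≤ G := le_csSup hSbdd ⟨f', hf'1, hf'ψ, rfl⟩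
    have h2 : Real.sqrt (G - ε) ≤ Real.sqrt ‖φ f‖ := Real.sqrt_le_sqrt (by rw [hfx]; exact hxgt.le)
    linarith
  have hG1 : 1 ≤ G := by
    by_contra hc
    push_neg at hc
    have hsG : G < Real.sqrt G := by
      have h1 : Real.sqrt G ^ 2 = G := Real.sq_sqrt hGpos.le
      nlinarith [Real.sqrt_nonneg G]
    set c := Real.sqrt G - G with hcdef
    have hcpos : 0 < c := by linarith
    set ε := min (G/2) (min (c/3) ((c/3)^2)) with hεdef
    have hεpos : 0 < ε := by
      apply lt_min (by linarith)
      apply lt_min (by linarith)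
      positivity
    have hεG : ε ≤ G/2 := min_le_left _ _
    have hεc : ε ≤ c/3 := le_trans (min_le_right _ _) (min_le_left _ _)
    have hεc2 : ε ≤ (c/3)^2 := le_trans (min_le_right _ _) (min_le_right _ _)
    have h1 := hGstep ε hεpos
    have h2 : Real.sqrt G - Real.sqrt ε ≤ Real.sqrt (G - ε) :=
      sqrt_sub_aux G ε (by linarith) hεpos.le
    have h3 : Real.sqrt ε ≤ c/3 := by
      calc Real.sqrt ε ≤ Real.sqrt ((c/3)^2) := Real.sqrt_le_sqrt hεc2
      _ = c/3 := Real.sqrt_sq (by linarith)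
    linarith
  have main : ∀ ε : ℝ, 0 < ε → ε < 1 → 2 - ε ≤ ‖φ - ψ‖ := by
    intro ε hε hε1
    have hδ : (0:ℝ) < ε^2/8 := by positivity
    have hrlt : 1 - ε^2/8 < G := by linarith
    obtain ⟨x, hxS, hxgt⟩ := exists_lt_of_lt_csSup hSne hrlt
    obtain ⟨f₂, hf₂1, hf₂ψ, hf₂x⟩ := hxS
    exact mobius_lemma A hclosed φ ψ hφm hφ1 hψm hψ1 hφb ε hε hε1 f₂ hf₂1 hf₂ψ
      (by rw [hf₂x]; exact hxgt)
  refine le_antisymm hub ?_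
  by_contra hcon
  push_neg at hcon
  set ε := min ((2 - ‖φ - ψ‖)/2) (1/2) with hεd
  have hεpos : 0 < ε := lt_min (by linarith) (by norm_num)
  have hεlt1 : ε < 1 := lt_of_le_of_lt (min_le_right _ _) (by norm_num)
  have hmain := main ε hεpos hεlt1
  have h2 : ε ≤ (2 - ‖φ - ψ‖)/2 := min_le_left _ _
  linarith
end
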